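/- Let H be a Hilbert space, a : V × V → ℝ a symmetric bilinear form on a Hilbert space V continuously embedded in H, with a(v,v) ≥ θ‖v‖²_V for some θ > 0 (coercivity) and ‖v‖²_H ≤ C_p a(v,v) (Poincaré). Suppose u* ∈ V satisfies a(u*, v) = (f, v)_H for all v ∈ V, and u : [0,∞) → V is a differentiable solution of (u′(t), v)_H + a(u(t), v) = (f, v)_H for all v ∈ V. Then t ↦ ‖u(t) − u*‖²_H is non-increasing, its derivative equals −2a(u(t) − u*, u(t) − u*), and a(u(t) − u*, u(t) − u*) → 0 as t → ∞; consequently u(t) → u* in V. -/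

import Mathlib

/-!
STATEMENT 9: Asymptotic convergence of parabolic solutions to the stationary solution:
t ↦ ‖u(t) − u*‖²_H is non-increasing with derivative −2a(u(t)−u*, u(t)−u*),
a(u(t)−u*, u(t)−u*) → 0 as t → ∞, and u(t) → u* in V.
-/

open Filter Topology

noncomputable section

theorem asymptotic_convergence_to_stationary
    {H V : Type*} [NormedAddCommGroup H] [InnerProductSpace ℝ H]
    [NormedAddCommGroup V] [InnerProductSpace ℝ V]
    -- continuous embedding of V into H
    (ι : V →L[ℝ] H)
    -- the symmetric bilinear form a on V
    (a : V →ₗ[ℝ] V →ₗ[ℝ] ℝ)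
    (hsymm : ∀ u v : V, a u v = a v u)
    (θ Cp : ℝ) (hθ : 0 < θ)
    -- coercivity a(v,v) ≥ θ‖v‖²_V
    (hcoer : ∀ v : V, θ * ‖v‖ ^ 2 ≤ a v v)
    -- Poincaré inequality ‖v‖²_H ≤ Cp a(v,v)
    (hPoin : ∀ v : V, ‖ι v‖ ^ 2 ≤ Cp * a v v)
    (f : H) (ustar : V)
    -- u* solves the stationary problem a(u*, v) = (f, v)_H
    (hstat : ∀ v : V, a ustar v = @inner ℝ _ _ f (ι v))
    (u : ℝ → V) (u' : ℝ → H)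
    -- u is a differentiable solution of (u′(t), v)_H + a(u(t), v) = (f, v)_H
    (hderiv : ∀ t, HasDerivAt (fun s => ι (u s)) (u' t) t)
    (heq : ∀ t, 0 ≤ t → ∀ v : V,
      (@inner ℝ _ _ (u' t) (ι v)) + a (u t) v = @inner ℝ _ _ f (ι v)) :
    -- t ↦ ‖u(t) − u*‖²_H is non-increasing on [0,∞)
    AntitoneOn (fun t => ‖ι (u t) - ι ustar‖ ^ 2) (Set.Ici 0) ∧
    -- with derivative −2a(u(t) − u*, u(t) − u*)
    (∀ t, 0 ≤ t → HasDerivAt (fun s => ‖ι (u s) - ι ustar‖ ^ 2)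
      (-2 * a (u t - ustar) (u t - ustar)) t) ∧
    -- the energy of the difference tends to zero
    Tendsto (fun t => a (u t - ustar) (u t - ustar)) atTop (𝓝 0) ∧
    -- consequently u(t) → u* in V
    Tendsto u atTop (𝓝 ustar) := by
  set G : ℝ → H := fun t => ι (u t) - ι ustar with hGdef
  set E : ℝ → ℝ := fun t => ‖ι (u t) - ι ustar‖ ^ 2 with hEdef
  set F : ℝ → ℝ := fun t => a (u t - ustar) (u t - ustar) with hFdef
  have hGw : ∀ t, G t = ι (u t - ustar) := by intro t; simp [hGdef, map_sub]
  -- derivative of G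
  have hg : ∀ t, HasDerivAt G (u' t) t := fun t => (hderiv t).sub_const _
  -- nonnegativity of the form
  have hann : ∀ v : V, 0 ≤ a v v := fun v =>
    le_trans (mul_nonneg hθ.le (sq_nonneg _)) (hcoer v)
  have hFnn : ∀ t, 0 ≤ F t := fun t => hann _
  -- key identity
  have key : ∀ t, 0 ≤ t → ∀ v : V,
      (inner ℝ (u' t) (ι v) : ℝ) = -(a (u t - ustar) v) := by
    intro t ht v
    have h1 := heq t ht v
    have h2 := hstat v
    have h3 : a (u t - ustar) v = a (u t) v - a ustar v := by
      simp [map_sub, LinearMap.sub_apply]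
    linarith
  -- derivative of E everywhere
  have hE0 : ∀ t, HasDerivAt E (2 * (inner ℝ (u' t) (G t) : ℝ)) t := by
    intro t
    have h := HasDerivAt.inner ℝ (hg t) (hg t)
    have heq2 : (fun s => (inner ℝ (G s) (G s) : ℝ)) = E := by
      funext s; rw [real_inner_self_eq_norm_sq]
    rw [← heq2]
    have hv : (inner ℝ (G t) (u' t) : ℝ) + (inner ℝ (u' t) (G t) : ℝ)
        = 2 * (inner ℝ (u' t) (G t) : ℝ) := by
      rw [real_inner_comm]; ring
    rw [← hv]
    exact h
  -- Part 2
  have hE' : ∀ t, 0 ≤ t → HasDerivAt E (-2 * F t) t := by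
    intro t ht
    have h := hE0 t
    have hv : (2 : ℝ) * (inner ℝ (u' t) (G t) : ℝ) = -2 * F t := by
      rw [hGw t, key t ht (u t - ustar)]; ring
    rwa [hv] at h
  have hEdiff : Differentiable ℝ E := fun t => (hE0 t).differentiableAt
  have hEcont : Continuous E := hEdiff.continuous
  -- Part 1
  have part1 : AntitoneOn E (Set.Ici (0:ℝ)) := by
    apply antitoneOn_of_deriv_nonpos (convex_Ici 0) hEcont.continuousOn
    · intro x _
      exact (hE0 x).differentiableAt.differentiableWithinAt
    · intro x hx
      rw [interior_Ici] at hx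
      rw [(hE' x (le_of_lt hx)).deriv]
      have := hFnn x
      linarith
  have hEnn : ∀ t, 0 ≤ E t := fun t => sq_nonneg _
  -- constancy along antidiagonals
  have hC : ∀ c : ℝ, 0 ≤ c → ∀ x ∈ Set.Icc (0:ℝ) c,
      (inner ℝ (G x) (G (c - x)) : ℝ) = E (c / 2) := by
    intro c hc x hx
    set Q : ℝ → ℝ := fun y => (inner ℝ (G y) (G (c - y)) : ℝ) with hQdef
    have hQd : ∀ y ∈ Set.Icc (0:ℝ) c, HasDerivAt Q 0 y := by
      intro y hy
      have hy1 : (0:ℝ) ≤ y := hy.1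
      have hy2 : (0:ℝ) ≤ c - y := by linarith [hy.2]
      have hcomp : HasDerivAt (fun z : ℝ => G (c - z)) (-u' (c - y)) y := by
        have h1 : HasDerivAt (fun z : ℝ => c - z) (-1) y := by
          simpa using (hasDerivAt_id y).const_sub c
        have h2 := (hg (c - y)).scomp y h1
        simpa [Function.comp_def] using h2
      have h := HasDerivAt.inner ℝ (hg y) hcomp
      have hval : (inner ℝ (G y) (-u' (c - y)) : ℝ) + (inner ℝ (u' y) (G (c - y)) : ℝ) = 0 := by
        have e1 : (inner ℝ (u' y) (G (c - y)) : ℝ)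
            = -(a (u y - ustar) (u (c - y) - ustar)) := by
          rw [hGw, key y hy1]
        have e2 : (inner ℝ (G y) (-u' (c - y)) : ℝ)
            = a (u (c - y) - ustar) (u y - ustar) := by
          rw [inner_neg_right, real_inner_comm, hGw, key (c - y) hy2]; ring
        rw [e1, e2, hsymm]
        ring
      rw [hval] at h
      exact h
    have hQcont : ContinuousOn Q (Set.Icc 0 c) := fun y hy =>
      ((hQd y hy).continuousAt).continuousWithinAt
    have hconst := constant_of_has_deriv_right_zero hQcont
      (fun y hy => (hQd y (Set.Ico_subset_Icc_self hy)).hasDerivWithinAt)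
    have h1 : Q x = Q 0 := hconst x hx
    have h2 : Q (c / 2) = Q 0 := hconst (c / 2) ⟨by linarith, by linarith⟩
    have h3 : Q (c / 2) = E (c / 2) := by
      have hcc : c - c / 2 = c / 2 := by ring
      simp only [hQdef, hcc, real_inner_self_eq_norm_sq]
      rfl
    show Q x = E (c / 2)
    rw [h1, ← h2]
    exact h3
  -- midpoint convexity of E on [0, ∞)
  have hmid : ∀ s t : ℝ, 0 ≤ s → 0 ≤ t → E ((s + t) / 2) ≤ (E s + E t) / 2 := by
    intro s t hs ht
    have hst : (0:ℝ) ≤ t + s := by linarith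
    have hx : t ∈ Set.Icc (0:ℝ) (t + s) := ⟨ht, by linarith⟩
    have h := hC (t + s) hst t hx
    have hsimp : t + s - t = s := by ring
    rw [hsimp] at h
    have hnn : (0:ℝ) ≤ ‖G t - G s‖ ^ 2 := sq_nonneg _
    rw [norm_sub_sq_real, h] at hnn
    have e1 : E t = ‖G t‖ ^ 2 := rfl
    have e2 : E s = ‖G s‖ ^ 2 := rfl
    have e3 : (s + t) / 2 = (t + s) / 2 := by ring
    rw [e3]
    linarith
  -- slope inequality
  have hslope : ∀ p b : ℝ, 0 ≤ p → p < b → (E b - E p) / (b - p) ≤ -2 * F b := by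
    intro p b hp hpb
    set L : ℝ := b - p with hLdef
    have hL : 0 < L := by rw [hLdef]; linarith
    set q : ℕ → ℝ := fun k => (E b - E (b - L / 2 ^ k)) / (L / 2 ^ k) with hqdef
    have hstep : ∀ k : ℕ, q k ≤ q (k + 1) := by
      intro k
      have h2k : (0:ℝ) < 2 ^ k := by positivity
      have hhk : (0:ℝ) < L / 2 ^ k := by positivity
      have hhk1 : (0:ℝ) < L / 2 ^ (k + 1) := by positivity
      have hhalf : L / 2 ^ (k + 1) = (L / 2 ^ k) / 2 := by
        rw [pow_succ]; ring
      have h1le : (1:ℝ) ≤ 2 ^ k := one_le_pow₀ (by norm_num)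
      have hle : L / 2 ^ k ≤ L := by
        rw [div_le_iff₀ h2k]; nlinarith
      have hble : 0 ≤ b - L / 2 ^ k := by
        have hbl : b - L = p := by rw [hLdef]; ring
        linarith
      have hm := hmid (b - L / 2 ^ k) b hble (by linarith)
      have hmeq : (b - L / 2 ^ k + b) / 2 = b - L / 2 ^ (k + 1) := by
        rw [hhalf]; ring
      rw [hmeq] at hm
      show (E b - E (b - L / 2 ^ k)) / (L / 2 ^ k)
          ≤ (E b - E (b - L / 2 ^ (k + 1))) / (L / 2 ^ (k + 1))
      rw [div_le_div_iff₀ hhk hhk1]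
      have key2 : (E b - E (b - L / 2 ^ k)) / 2 ≤ E b - E (b - L / 2 ^ (k + 1)) := by
        linarith
      calc (E b - E (b - L / 2 ^ k)) * (L / 2 ^ (k + 1))
          = ((E b - E (b - L / 2 ^ k)) / 2) * (L / 2 ^ k) := by rw [hhalf]; ring
        _ ≤ (E b - E (b - L / 2 ^ (k + 1))) * (L / 2 ^ k) :=
            mul_le_mul_of_nonneg_right key2 hhk.le
    have hmono : ∀ k : ℕ, q 0 ≤ q k := by
      intro k
      induction k with
      | zero => exact le_rfl
      | succ n ih => exact le_trans ih (hstep n)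
    have hlim : Tendsto q atTop (𝓝 (-2 * F b)) := by
      have hds := hasDerivAt_iff_tendsto_slope.mp (hE' b (by linarith))
      have hseq : Tendsto (fun k : ℕ => b - L / 2 ^ k) atTop (𝓝[≠] b) := by
        apply tendsto_nhdsWithin_of_tendsto_nhds_of_eventually_within
        · have h0 : Tendsto (fun k : ℕ => L / 2 ^ k) atTop (𝓝 0) := by
            simp_rw [div_eq_mul_inv, ← inv_pow]
            simpa using (tendsto_pow_atTop_nhds_zero_of_lt_one
              (by norm_num : (0:ℝ) ≤ 2⁻¹) (by norm_num : (2:ℝ)⁻¹ < 1)).const_mul L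
          have h1 := h0.const_sub b
          simpa using h1
        · filter_upwards with k
          have hpos : (0:ℝ) < L / 2 ^ k := by positivity
          simp only [Set.mem_compl_iff, Set.mem_singleton_iff]
          intro hcontra
          nlinarith
      have hcompo := hds.comp hseq
      have heqq : (slope E b ∘ fun k : ℕ => b - L / 2 ^ k) = q := by
        funext k
        have hhk : (0:ℝ) < L / 2 ^ k := by positivity
        show slope E b (b - L / 2 ^ k) = (E b - E (b - L / 2 ^ k)) / (L / 2 ^ k)
        rw [slope_def_field]
        rw [show b - L / 2 ^ k - b = -(L / 2 ^ k) by ring, div_neg, ← neg_div, neg_sub]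
      rwa [heqq] at hcompo
    have hle0 := le_of_tendsto_of_tendsto' tendsto_const_nhds hlim hmono
    have hq0 : q 0 = (E b - E p) / (b - p) := by
      show (E b - E (b - L / 2 ^ 0)) / (L / 2 ^ 0) = (E b - E p) / (b - p)
      rw [hLdef]; norm_num
    rwa [hq0] at hle0
  -- F b ≤ E 0 / b
  have hFbound : ∀ b : ℝ, 0 < b → F b ≤ E 0 / b := by
    intro b hb
    have h := hslope (b / 2) b (by linarith) (by linarith)
    have hE12 : E (b / 2) ≤ E 0 :=
      part1 Set.self_mem_Ici (Set.mem_Ici.mpr (by linarith)) (by linarith)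
    have hEb : 0 ≤ E b := hEnn b
    have hbp : b - b / 2 = b / 2 := by ring
    rw [hbp] at h
    rw [div_le_iff₀ (by linarith : (0:ℝ) < b / 2)] at h
    rw [le_div_iff₀ hb]
    nlinarith
  -- Part 3
  have part3 : Tendsto F atTop (𝓝 0) := by
    apply squeeze_zero' (Filter.Eventually.of_forall hFnn)
    · filter_upwards [eventually_gt_atTop (0:ℝ)] with b hb
      exact hFbound b hb
    · exact tendsto_const_nhds.div_atTop tendsto_id
  -- Part 4
  have part4 : Tendsto u atTop (𝓝 ustar) := by
    have hdiv : Tendsto (fun t => F t / θ) atTop (𝓝 0) := by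
      simpa using part3.div_const θ
    have h1 : Tendsto (fun t => ‖u t - ustar‖ ^ 2) atTop (𝓝 0) := by
      apply squeeze_zero' (Filter.Eventually.of_forall fun t => sq_nonneg _)
        (Filter.Eventually.of_forall fun t => ?_) hdiv
      exact (le_div_iff₀' hθ).mpr (hcoer _)
    have h2 : Tendsto (fun t => ‖u t - ustar‖) atTop (𝓝 0) := by
      have h3 := (Real.continuous_sqrt.tendsto 0).comp h1
      simp only [Function.comp_def, Real.sqrt_zero] at h3
      have h4 : (fun t => Real.sqrt (‖u t - ustar‖ ^ 2)) = fun t => ‖u t - ustar‖ := by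
        funext t; exact Real.sqrt_sq (norm_nonneg _)
      rwa [h4] at h3
    exact tendsto_iff_norm_sub_tendsto_zero.mpr h2
  exact ⟨part1, hE', part3, part4⟩
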